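/- Suppose f : ℂ → ℂ is entire and for every a, b > 0 there is a constant C(a,b) such that |f(x + iy)| ≤ C(a,b) exp(−a|x|^(1/s) + b|y|^(1/s)) for all x, y ∈ ℝ, where s > 0. Then f ≡ 0. -/

import Mathlib

open Complex

theorem stmt_2 (s : ℝ) (hs : 0 < s) (f : ℂ → ℂ) (hf : Differentiable ℂ f)
    (h : ∀ a b : ℝ, 0 < a → 0 < b → ∃ C : ℝ, ∀ x y : ℝ,
      ‖f (x + y * Complex.I)‖ ≤ C * Real.exp (-a * |x| ^ (1/s) + b * |y| ^ (1/s))) :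
    ∀ z : ℂ, f z = 0 := by
  set t : ℝ := 1/s with ht_def
  have ht : 0 < t := by positivity
  obtain ⟨C, hC⟩ := h 2 1 (by norm_num) (by norm_num)
  have hC0 : 0 ≤ C := by
    by_contra hneg
    push_neg at hneg
    have h00 := hC 0 0
    nlinarith [Real.exp_pos (-2 * |(0:ℝ)| ^ t + 1 * |(0:ℝ)| ^ t), norm_nonneg (f ((0:ℝ) + (0:ℝ) * I))]
  set g : ℂ → ℂ := fun z => f z * f (I * z) with hg_def
  have hgdiff : Differentiable ℂ g :=
    hf.mul (hf.comp (differentiable_id.const_mul I))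
  -- bound on g
  have hgb : ∀ z : ℂ, ‖g z‖ ≤ C^2 * Real.exp (-(|z.re| ^ t) - |z.im| ^ t) := by
    intro z
    have h1 : ‖f z‖ ≤ C * Real.exp (-2 * |z.re| ^ t + 1 * |z.im| ^ t) := by
      have := hC z.re z.im
      rwa [Complex.re_add_im] at this
    have h2 : ‖f (I * z)‖ ≤ C * Real.exp (-2 * |z.im| ^ t + 1 * |z.re| ^ t) := by
      have := hC (-z.im) z.re
      rw [abs_neg] at this
      have heq : ((-z.im : ℝ) : ℂ) + (z.re : ℝ) * I = I * z := by
        apply Complex.ext <;> simp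
      rwa [heq] at this
    calc ‖g z‖ = ‖f z‖ * ‖f (I * z)‖ := norm_mul _ _
      _ ≤ (C * Real.exp (-2 * |z.re| ^ t + 1 * |z.im| ^ t)) *
          (C * Real.exp (-2 * |z.im| ^ t + 1 * |z.re| ^ t)) := by
          exact mul_le_mul h1 h2 (norm_nonneg _) (by positivity)
      _ = C^2 * Real.exp (-(|z.re| ^ t) - |z.im| ^ t) := by
          rw [mul_mul_mul_comm, ← Real.exp_add, ← sq]
          congr 1; ring_nf
  have hgbdd : ∀ z : ℂ, ‖g z‖ ≤ C^2 := by
    intro z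
    refine (hgb z).trans ?_
    have : Real.exp (-(|z.re| ^ t) - |z.im| ^ t) ≤ 1 := by
      rw [Real.exp_le_one_iff]
      have h1 : (0:ℝ) ≤ |z.re| ^ t := by positivity
      have h2 : (0:ℝ) ≤ |z.im| ^ t := by positivity
      linarith
    nlinarith [sq_nonneg C]
  -- Liouville: g constant
  have hgconst : ∀ z : ℂ, g z = g 0 := by
    intro z
    apply hgdiff.apply_eq_apply_of_bounded
    rw [Metric.isBounded_iff_subset_closedBall 0]
    refine ⟨C^2, ?_⟩
    rintro w ⟨z, rfl⟩
    simpa [Metric.mem_closedBall, dist_eq_norm] using hgbdd z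
  -- g 0 = 0
  have hg0 : g 0 = 0 := by
    by_contra hne
    have hlim : Filter.Tendsto (fun n : ℕ => C^2 * Real.exp (-(|(n:ℝ)| ^ t) - |(0:ℝ)| ^ t))
        Filter.atTop (nhds 0) := by
      have hmain : Filter.Tendsto (fun n : ℕ => Real.exp (-(|(n:ℝ)| ^ t) - |(0:ℝ)| ^ t))
          Filter.atTop (nhds 0) := by
        apply Real.tendsto_exp_atBot.comp
        have h1 : Filter.Tendsto (fun n : ℕ => (n:ℝ) ^ t) Filter.atTop Filter.atTop :=
          (tendsto_rpow_atTop ht).comp tendsto_natCast_atTop_atTop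
        have heq : (fun n : ℕ => -(|(n:ℝ)| ^ t) - |(0:ℝ)| ^ t) = fun n : ℕ => -((n:ℝ) ^ t) := by
          funext n
          simp [abs_of_nonneg (Nat.cast_nonneg n : (0:ℝ) ≤ n), Real.zero_rpow ht.ne']
        rw [heq]
        exact Filter.tendsto_neg_atBot_iff.mpr h1
      simpa using hmain.const_mul (C^2)
    have hle : ∀ n : ℕ, ‖g 0‖ ≤ C^2 * Real.exp (-(|(n:ℝ)| ^ t) - |(0:ℝ)| ^ t) := by
      intro n
      have := hgb ((n:ℝ) : ℂ)
      rw [hgconst ((n:ℝ) : ℂ)] at this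
      simpa using this
    have : ‖g 0‖ ≤ 0 := le_of_tendsto_of_tendsto' tendsto_const_nhds hlim hle
    exact hne (norm_le_zero_iff.mp this)
  have hgzero : ∀ z : ℂ, f z * f (I * z) = 0 := by
    intro z; have := hgconst z; rw [hg0] at this; exact this
  -- identity theorem step
  by_contra hcon
  push_neg at hcon
  obtain ⟨z₀, hz₀⟩ := hcon
  set F : ℂ → ℂ := fun w => f (I * w) with hF_def
  have hFdiff : Differentiable ℂ F := hf.comp (differentiable_id.const_mul I)
  have hFev : F =ᶠ[nhds z₀] 0 := by
    have hne : ∀ᶠ w in nhds z₀, f w ≠ 0 :=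
      (hf.continuous.continuousAt).eventually_ne hz₀
    filter_upwards [hne] with w hw
    have := hgzero w
    rcases mul_eq_zero.mp this with h1 | h2
    · exact absurd h1 hw
    · exact h2
  have hFzero : ∀ w : ℂ, F w = 0 := by
    have hAn : AnalyticOnNhd ℂ F Set.univ := hFdiff.differentiableOn.analyticOnNhd isOpen_univ
    have := hAn.eqOn_zero_of_preconnected_of_eventuallyEq_zero
      isPreconnected_univ (Set.mem_univ z₀) hFev
    intro w; exact this (Set.mem_univ w)
  have : f z₀ = 0 := by
    have := hFzero (-I * z₀)
    simp only [hF_def] at this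
    rw [show I * (-I * z₀) = z₀ by ring_nf; simp [Complex.I_sq]] at this
    exact this
  exact hz₀ this
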